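/- Let q = 2^h, h > p > 0, and k + 2 ≤ m. The Class III code C = ∪_{b ∈ R_{2^h}(k,m)} { b + a : a ∈ A_{2^h}^{p-1}(k,k+1,m) } is contained in ZRM_{2^h}^p(k+2,m), and consequently for any two distinct codewords u, v ∈ C, the Hamming distance between u and v is at least 2^{m-k-2} and the Lee distance is at least 2^{m-k-2+p}. -/

import Mathlib

open Finset

/-- The binary expansion of `i`, as a point of `ℤ₂^m`. -/
def bits (m : ℕ) (i : ℕ) : Fin m → ZMod 2 := fun j => if Nat.testBit i j.val then 1 else 0

/-- Admissibility condition on ANF coefficients for `ZRM_{2^h}^p(r,m)`. -/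
def zrmCond (h p r m : ℕ) (c : Finset (Fin m) → ZMod (2 ^ h)) : Prop :=
  ∀ S : Finset (Fin m),
    (r < S.card → c S = 0) ∧
    (r - p < S.card → S.card ≤ r →
      ∃ u : ZMod (2 ^ h), c S = 2 ^ (S.card - (r - p)) * u)

/-- The vector of length `2^m` associated with ANF coefficients `c`. -/
def anfVec (h m : ℕ) (c : Finset (Fin m) → ZMod (2 ^ h)) : Fin (2 ^ m) → ZMod (2 ^ h) :=
  fun i => ∑ S : Finset (Fin m), c S * ∏ α ∈ S, ((bits m i.val α).val : ZMod (2 ^ h))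

/-- The code `ZRM_{2^h}^p(r,m)`. -/
def ZRM (h p r m : ℕ) : Set (Fin (2 ^ m) → ZMod (2 ^ h)) :=
  {v | ∃ c : Finset (Fin m) → ZMod (2 ^ h), zrmCond h p r m c ∧ v = anfVec h m c}

/-- The linear code `L_{2^h}(k,m)`. -/
def LCode (h m k : ℕ) (iI : ℕ → Fin m) (jJ : Fin k → Fin m) :
    Set (Fin (2 ^ m) → ZMod (2 ^ h)) :=
  {v | ∃ (g : ℕ → (Fin k → ZMod 2) → ZMod (2 ^ h)) (g' : (Fin k → ZMod 2) → ZMod (2 ^ h)),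
    v = fun i =>
      (∑ α ∈ Finset.range (m - k),
          ((bits m i.val (iI α)).val : ZMod (2 ^ h)) * g α (fun b => bits m i.val (jJ b)))
        + g' (fun b => bits m i.val (jJ b))}

/-- The function `b` defining the coset representatives in `R_{2^h}(k,m)`. -/
def bFun (h m k : ℕ) (jJ : Fin k → Fin m) (π : (Fin k → ZMod 2) → ℕ → Fin m)
    (y : Fin m → ZMod 2) : ZMod (2 ^ h) :=
  ((2 ^ (h - 1) * ∑ d : Fin k → ZMod 2,
      (∑ α ∈ Finset.range (m - k - 1), (y (π d α)).val * (y (π d (α + 1))).val)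
        * ∏ b : Fin k, (y (jJ b)).val ^ (d b).val * (1 - (y (jJ b)).val) ^ (1 - (d b).val)
    : ℕ) : ZMod (2 ^ h))

/-- The set `R_{2^h}(k,m)` of coset representatives. -/
def RCode (h m k : ℕ) (iI : ℕ → Fin m) (jJ : Fin k → Fin m) :
    Set (Fin (2 ^ m) → ZMod (2 ^ h)) :=
  {v | ∃ π : (Fin k → ZMod 2) → ℕ → Fin m,
    (∀ d, Set.InjOn (π d) (Set.Iio (m - k)) ∧
      (π d) '' Set.Iio (m - k) = iI '' Set.Iio (m - k)) ∧
    v = fun i => bFun h m k jJ π (bits m i.val)}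

/-- Hamming distance. -/
def distH {n q : ℕ} (u v : Fin n → ZMod q) : ℕ := (Finset.univ.filter fun i => u i ≠ v i).card

/-- Lee weight. -/
def wtL {n q : ℕ} (v : Fin n → ZMod q) : ℕ := ∑ i : Fin n, min (v i).val (q - (v i).val)

-- AUX START
-- Section 1: bits bijection
lemma bits_injective (m : ℕ) : Function.Injective (fun i : Fin (2^m) => bits m i.val) := by
  intro i j hij
  apply Fin.ext
  apply Nat.eq_of_testBit_eq
  intro b
  by_cases hb : b < m
  · have := congrFun hij ⟨b, hb⟩
    simp only [bits] at this
    by_cases h1 : i.val.testBit b <;> by_cases h2 : j.val.testBit b <;> simp_all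
  · have h1 : i.val.testBit b = false :=
      Nat.testBit_lt_two_pow (lt_of_lt_of_le i.isLt (Nat.pow_le_pow_right (by norm_num) (le_of_not_gt hb)))
    have h2 : j.val.testBit b = false :=
      Nat.testBit_lt_two_pow (lt_of_lt_of_le j.isLt (Nat.pow_le_pow_right (by norm_num) (le_of_not_gt hb)))
    rw [h1, h2]

lemma bits_bijective (m : ℕ) : Function.Bijective (fun i : Fin (2^m) => bits m i.val) := by
  rw [Fintype.bijective_iff_injective_and_card]
  refine ⟨bits_injective m, ?_⟩
  simp [ZMod.card]

-- Section 2: evaluation at indicator vectors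
def chi (m : ℕ) (T : Finset (Fin m)) : Fin m → ZMod 2 := fun v => if v ∈ T then 1 else 0

lemma prod_chi (q m : ℕ) (T S : Finset (Fin m)) :
    (∏ α ∈ S, (((chi m T α).val : ℕ) : ZMod q)) = if S ⊆ T then 1 else 0 := by
  by_cases hST : S ⊆ T
  · rw [if_pos hST]
    apply Finset.prod_eq_one
    intro α hα
    simp only [chi, if_pos (hST hα)]
    norm_num [ZMod.val_one]
  · rw [if_neg hST]
    obtain ⟨α, hαS, hαT⟩ := Finset.not_subset.mp hST
    exact Finset.prod_eq_zero hαS (by simp [chi, hαT])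

-- Section 3: parity helpers
lemma zmod_val_cast_self {n : ℕ} [NeZero n] (x : ZMod n) : ((x.val : ℕ) : ZMod n) = x := by
  simp [ZMod.natCast_val, ZMod.cast_id]

lemma dvd_val_of_mul_eq_zero {h t : ℕ} (hth : t < h) (x : ZMod (2^h))
    (hx : (2:ZMod (2^h))^t * x = 0) : 2 ∣ x.val := by
  haveI : NeZero (2^h) := ⟨(pow_pos (by norm_num) h).ne'⟩
  have h0 : ((2^t * x.val : ℕ) : ZMod (2^h)) = 0 := by
    push_cast
    rw [zmod_val_cast_self]
    exact hx
  rw [ZMod.natCast_eq_zero_iff] at h0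
  have h2 : (2:ℕ)^t * 2^(h-t) ∣ 2^t * x.val := by
    rw [← pow_add, Nat.add_sub_cancel' hth.le]
    exact h0
  have h3 := (mul_dvd_mul_iff_left (a := (2:ℕ)^t) (by positivity)).mp h2
  exact dvd_trans (dvd_pow_self 2 (by omega : h - t ≠ 0)) h3

lemma eq_two_mul_of_dvd_val {h : ℕ} (x : ZMod (2^h)) (hx : 2 ∣ x.val) : ∃ y, x = 2 * y := by
  haveI : NeZero (2^h) := ⟨(pow_pos (by norm_num) h).ne'⟩
  obtain ⟨y, hy⟩ := hx
  exact ⟨(y:ℕ), by rw [← zmod_val_cast_self x, hy]; push_cast; ring⟩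
-- Section 4: Reed-Muller minimum weight bound over ZMod 2
lemma rm_bound {ι : Type*} [DecidableEq ι] (V : Finset ι) :
    ∀ (r : ℕ) (c : Finset ι → ZMod 2),
      (∀ S, ¬ S ⊆ V → c S = 0) → (∀ S, r < S.card → c S = 0) → (∃ S, c S ≠ 0) →
      2 ^ (V.card - r) ≤ (V.powerset.filter fun T => (∑ S ∈ T.powerset, c S) ≠ 0).card := by
  induction V using Finset.induction_on with
  | empty =>
    rintro r c hsupp hdeg ⟨S0, hS0⟩
    have hS0' : S0 = ∅ := by
      by_contra hne
      exact hS0 (hsupp _ (by simpa [Finset.subset_empty] using hne))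
    subst hS0'
    have hmem : (∅ : Finset ι) ∈ (∅:Finset ι).powerset.filter
        fun T => (∑ S ∈ T.powerset, c S) ≠ 0 := by
      rw [Finset.mem_filter]
      refine ⟨by simp, ?_⟩
      simpa using hS0
    calc 2^((∅:Finset ι).card - r) = 1 := by simp
    _ ≤ _ := Finset.card_pos.mpr ⟨_, hmem⟩
  | @insert x V' hx ih =>
    intro r c hsupp hdeg hne
    set c0 : Finset ι → ZMod 2 := fun S => if x ∈ S then 0 else c S with hc0def
    set c1 : Finset ι → ZMod 2 := fun S => if x ∈ S then 0 else c (insert x S) with hc1def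
    have heval0 : ∀ T ∈ V'.powerset, (∑ S ∈ T.powerset, c S) = ∑ S ∈ T.powerset, c0 S := by
      intro T hT
      refine Finset.sum_congr rfl fun S hS => ?_
      have hxS : x ∉ S := fun h' => hx ((Finset.mem_powerset.mp hT) ((Finset.mem_powerset.mp hS) h'))
      simp [hc0def, hxS]
    have hsplit : ∀ T ∈ V'.powerset,
        (∑ S ∈ (insert x T).powerset, c S) = (∑ S ∈ T.powerset, c0 S) + (∑ S ∈ T.powerset, c1 S) := by
      intro T hT
      have hxT : x ∉ T := fun h' => hx ((Finset.mem_powerset.mp hT) h')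
      have hxS : ∀ S ∈ T.powerset, x ∉ S := fun S hS h' => hxT ((Finset.mem_powerset.mp hS) h')
      rw [Finset.powerset_insert, Finset.sum_union, Finset.sum_image]
      · congr 1
        · exact Finset.sum_congr rfl fun S hS => by simp [hc0def, hxS S hS]
        · exact Finset.sum_congr rfl fun S hS => by simp [hc1def, hxS S hS]
      · intro S1 h1 S2 h2 he
        have := congrArg (fun s => Finset.erase s x) he
        simpa [Finset.erase_insert (hxS S1 h1), Finset.erase_insert (hxS S2 h2)] using this
      · rw [Finset.disjoint_left]
        intro S hS hS'
        obtain ⟨S', _, rfl⟩ := Finset.mem_image.mp hS'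
        exact (hxS _ hS) (Finset.mem_insert_self x S')
    by_cases h1zero : ∀ S, c1 S = 0
    · -- c1 vanishes: double up
      have hc0ne : ∃ S, c0 S ≠ 0 := by
        obtain ⟨S0, hS0⟩ := hne
        by_cases hxS : x ∈ S0
        · by_cases hsub : S0 ⊆ insert x V'
          · have hb : x ∉ S0.erase x := Finset.notMem_erase x S0
            have : c1 (S0.erase x) = c S0 := by
              simp [hc1def, hb, Finset.insert_erase hxS]
            exact absurd (h1zero (S0.erase x)) (by rw [this]; exact hS0)
          · exact absurd (hsupp _ hsub) hS0
        · exact ⟨S0, by simpa [hc0def, hxS] using hS0⟩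
      have hsupp0 : ∀ S, ¬ S ⊆ V' → c0 S = 0 := by
        intro S hS
        by_cases hxS : x ∈ S
        · simp [hc0def, hxS]
        · simp only [hc0def, if_neg hxS]
          refine hsupp S fun hsub => hS ?_
          exact (Finset.subset_insert_iff_of_notMem hxS).mp hsub
      have hdeg0 : ∀ S, r < S.card → c0 S = 0 := by
        intro S hcard
        by_cases hxS : x ∈ S <;> simp [hc0def, hxS, hdeg S hcard]
      have IH0 := ih r c0 hsupp0 hdeg0 hc0ne
      set G0 := V'.powerset.filter fun T => (∑ S ∈ T.powerset, c0 S) ≠ 0 with hG0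
      set F := (insert x V').powerset.filter fun T => (∑ S ∈ T.powerset, c S) ≠ 0 with hF
      have hsub1 : G0 ⊆ F := by
        intro T hT
        obtain ⟨hT1, hT2⟩ := Finset.mem_filter.mp hT
        refine Finset.mem_filter.mpr ⟨Finset.mem_powerset.mpr ((Finset.mem_powerset.mp hT1).trans (Finset.subset_insert x V')), ?_⟩
        rw [heval0 T hT1]; exact hT2
      have hsub2 : G0.image (insert x) ⊆ F := by
        intro T hT
        obtain ⟨T', hT', rfl⟩ := Finset.mem_image.mp hT
        obtain ⟨hT1, hT2⟩ := Finset.mem_filter.mp hT'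
        refine Finset.mem_filter.mpr ⟨Finset.mem_powerset.mpr (Finset.insert_subset_insert x (Finset.mem_powerset.mp hT1)), ?_⟩
        rw [hsplit T' hT1, Finset.sum_eq_zero fun S _ => h1zero S, add_zero]
        exact hT2
      have hdisj : Disjoint G0 (G0.image (insert x)) := by
        rw [Finset.disjoint_left]
        intro T hT hT'
        obtain ⟨T', _, rfl⟩ := Finset.mem_image.mp hT'
        exact hx ((Finset.mem_powerset.mp (Finset.mem_filter.mp hT).1) (Finset.mem_insert_self x T'))
      have hcard : 2 * G0.card ≤ F.card := by
        have h1 : (G0 ∪ G0.image (insert x)).card ≤ F.card :=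
          Finset.card_le_card (Finset.union_subset hsub1 hsub2)
        rw [Finset.card_union_of_disjoint hdisj] at h1
        have h2 : (G0.image (insert x)).card = G0.card := by
          apply Finset.card_image_of_injOn
          intro S1 h1' S2 h2' he
          have hx1 : x ∉ S1 := fun h' => hx ((Finset.mem_powerset.mp (Finset.mem_filter.mp h1').1) h')
          have hx2 : x ∉ S2 := fun h' => hx ((Finset.mem_powerset.mp (Finset.mem_filter.mp h2').1) h')
          have := congrArg (fun s => Finset.erase s x) he
          simpa [Finset.erase_insert hx1, Finset.erase_insert hx2] using this
        omega
      calc 2 ^ ((insert x V').card - r) ≤ 2 ^ ((V'.card - r) + 1) := by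
            apply Nat.pow_le_pow_right (by norm_num)
            rw [Finset.card_insert_of_notMem hx]
            omega
      _ = 2 * 2 ^ (V'.card - r) := by ring
      _ ≤ 2 * G0.card := by omega
      _ ≤ F.card := hcard
    · -- c1 does not vanish
      push_neg at h1zero
      obtain ⟨S1, hS1⟩ := h1zero
      have hxS1 : x ∉ S1 := fun h' => hS1 (by simp [hc1def, h'])
      have hr : 1 ≤ r := by
        by_contra hr
        have : r = 0 := by omega
        subst this
        refine hS1 ?_
        have : c (insert x S1) = 0 := hdeg _ (by simp [Finset.card_insert_of_notMem hxS1])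
        simp [hc1def, hxS1, this]
      have hsupp1 : ∀ S, ¬ S ⊆ V' → c1 S = 0 := by
        intro S hS
        by_cases hxS : x ∈ S
        · simp [hc1def, hxS]
        · simp only [hc1def, if_neg hxS]
          refine hsupp _ fun hsub => hS ?_
          intro a ha
          have := hsub (Finset.mem_insert_of_mem ha)
          rcases Finset.mem_insert.mp this with h' | h'
          · exact absurd (h' ▸ ha) hxS
          · exact h'
      have hdeg1 : ∀ S, r - 1 < S.card → c1 S = 0 := by
        intro S hcard
        by_cases hxS : x ∈ S
        · simp [hc1def, hxS]
        · simp only [hc1def, if_neg hxS]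
          exact hdeg _ (by rw [Finset.card_insert_of_notMem hxS]; omega)
      have IH1 := ih (r-1) c1 hsupp1 hdeg1 ⟨S1, hS1⟩
      set G1 := V'.powerset.filter fun T => (∑ S ∈ T.powerset, c1 S) ≠ 0 with hG1
      set F := (insert x V').powerset.filter fun T => (∑ S ∈ T.powerset, c S) ≠ 0 with hF
      set φ : Finset ι → Finset ι := fun T => if (∑ S ∈ T.powerset, c S) ≠ 0 then T else insert x T with hφ
      have hmaps : ∀ T ∈ G1, φ T ∈ F := by
        intro T hT
        obtain ⟨hT1, hT2⟩ := Finset.mem_filter.mp hT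
        by_cases hc : (∑ S ∈ T.powerset, c S) ≠ 0
        · simp only [hφ, if_pos hc]
          exact Finset.mem_filter.mpr ⟨Finset.mem_powerset.mpr ((Finset.mem_powerset.mp hT1).trans (Finset.subset_insert x V')), hc⟩
        · simp only [hφ, if_neg hc]
          push_neg at hc
          refine Finset.mem_filter.mpr ⟨Finset.mem_powerset.mpr (Finset.insert_subset_insert x (Finset.mem_powerset.mp hT1)), ?_⟩
          rw [hsplit T hT1, ← heval0 T hT1, hc, zero_add]
          exact hT2
      have hinj : Set.InjOn φ G1 := by
        intro T1 h1' T2 h2' he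
        have hx1 : x ∉ T1 := fun h' => hx ((Finset.mem_powerset.mp (Finset.mem_filter.mp h1').1) h')
        have hx2 : x ∉ T2 := fun h' => hx ((Finset.mem_powerset.mp (Finset.mem_filter.mp h2').1) h')
        have e1 : (φ T1).erase x = T1 := by
          rcases eq_or_ne (∑ S ∈ T1.powerset, c S) 0 with hc | hc
          · simp [hφ, hc, Finset.erase_insert hx1]
          · simp [hφ, hc, Finset.erase_eq_of_notMem hx1]
        have e2 : (φ T2).erase x = T2 := by
          rcases eq_or_ne (∑ S ∈ T2.powerset, c S) 0 with hc | hc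
          · simp [hφ, hc, Finset.erase_insert hx2]
          · simp [hφ, hc, Finset.erase_eq_of_notMem hx2]
        rw [← e1, ← e2, he]
      have hcard : G1.card ≤ F.card := Finset.card_le_card_of_injOn φ hmaps hinj
      calc 2 ^ ((insert x V').card - r) ≤ 2 ^ (V'.card - (r-1)) := by
            apply Nat.pow_le_pow_right (by norm_num)
            rw [Finset.card_insert_of_notMem hx]
            omega
      _ ≤ G1.card := IH1
      _ ≤ F.card := hcard

lemma exists_max_nat {P : ℕ → Prop} {b : ℕ} (h0 : P 0) (hb : ¬ P b) :
    ∃ t, t < b ∧ P t ∧ ¬ P (t+1) := by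
  by_contra hcon
  push_neg at hcon
  have hall : ∀ t, t ≤ b → P t := by
    intro t
    induction t with
    | zero => intro _; exact h0
    | succ n ihn => intro hle; exact hcon n (by omega) (ihn (by omega))
  exact hb (hall b le_rfl)

-- Section 5: evaluation of anfVec at indicator points
lemma anfVec_eval (h m : ℕ) (c : Finset (Fin m) → ZMod (2^h)) (i : Fin (2^m)) (T : Finset (Fin m))
    (hi : bits m i.val = chi m T) : anfVec h m c i = ∑ S ∈ T.powerset, c S := by
  unfold anfVec
  rw [hi]
  calc (∑ S : Finset (Fin m), c S * ∏ α ∈ S, (((chi m T α).val : ℕ) : ZMod (2^h)))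
      = ∑ S : Finset (Fin m), (if S ⊆ T then c S else 0) := by
        refine Finset.sum_congr rfl fun S _ => ?_
        rw [prod_chi]
        split <;> simp
    _ = ∑ S ∈ Finset.univ.filter (· ⊆ T), c S := by rw [Finset.sum_filter]
    _ = ∑ S ∈ T.powerset, c S := by
        apply Finset.sum_congr _ (fun _ _ => rfl)
        ext S
        simp
lemma chi_injective (m : ℕ) : Function.Injective (chi m) := by
  intro T1 T2 he
  ext v
  have := congrFun he v
  by_cases h1 : v ∈ T1 <;> by_cases h2 : v ∈ T2 <;> simp_all [chi]

-- Section 6: pointwise Lee lower bound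
lemma lee_lower {h t : ℕ} (hth : t < h) (z : ZMod (2^h)) (hz : ¬ 2 ∣ z.val) :
    2^t ≤ min ((2^t * z : ZMod (2^h)).val) (2^h - (2^t * z : ZMod (2^h)).val) := by
  haveI : NeZero (2^h) := ⟨(pow_pos (by norm_num : (0:ℕ) < 2) h).ne'⟩
  have hsplit : (2:ℕ)^h = 2^t * 2^(h-t) := by rw [← pow_add, Nat.add_sub_cancel' hth.le]
  have hval : ((2^t * z : ZMod (2^h))).val = 2^t * (z.val % 2^(h-t)) := by
    have h1 : (2^t * z : ZMod (2^h)) = ((2^t * z.val : ℕ) : ZMod (2^h)) := by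
      push_cast
      rw [zmod_val_cast_self]
    rw [h1, ZMod.val_natCast]
    have h4 : 2^t * z.val % (2^t * 2^(h-t)) = 2^t * (z.val % 2^(h-t)) :=
      Nat.mul_mod_mul_left _ _ _
    rw [← hsplit] at h4
    exact h4
  set b := z.val % 2^(h-t) with hb
  have hbodd : ¬ 2 ∣ b := by
    intro hd
    apply hz
    have h2 : (2:ℕ) ∣ 2^(h-t) := dvd_pow_self 2 (by omega)
    have h3 := Nat.mod_mod_of_dvd z.val h2
    rw [hb] at hd
    omega
  have hblt : b < 2^(h-t) := Nat.mod_lt _ (pow_pos (by norm_num) _)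
  have hb1 : 1 ≤ b := by omega
  rw [hval]
  apply le_min
  · calc 2^t = 2^t * 1 := (mul_one _).symm
    _ ≤ 2^t * b := Nat.mul_le_mul_left _ hb1
  · have hx : 2^t * (2^(h-t) - b) = 2^h - 2^t * b := by
      rw [Nat.mul_sub, hsplit]
    calc 2^t = 2^t * 1 := (mul_one _).symm
    _ ≤ 2^t * (2^(h-t) - b) := Nat.mul_le_mul_left _ (by omega)
    _ = 2^h - 2^t * b := hx

-- Section 7: the ZRM weight bound
lemma zrm_weight (h p r m : ℕ) (hph : p < h) (hp : 0 < p) (hpr : p ≤ r) (hrm : r ≤ m)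
    (c : Finset (Fin m) → ZMod (2^h)) (hc : zrmCond h p r m c)
    (hw0 : anfVec h m c ≠ 0) :
    2^(m-r) ≤ (Finset.univ.filter fun i => anfVec h m c i ≠ 0).card
      ∧ 2^(m-r+p) ≤ wtL (anfVec h m c) := by
  classical
  haveI : NeZero (2^h) := ⟨(pow_pos (by norm_num : (0:ℕ) < 2) h).ne'⟩
  have hcne : ∃ S, c S ≠ 0 := by
    by_contra hall
    push_neg at hall
    exact hw0 (funext fun i => by simp [anfVec, hall])
  obtain ⟨S₀', hS₀'⟩ := hcne
  have hP0 : ∀ S, ∃ u : ZMod (2^h), c S = 2^0 * u := fun S => ⟨c S, by ring⟩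
  have h2h : (2:ZMod (2^h))^h = 0 := by
    have h1 : ((2^h : ℕ) : ZMod (2^h)) = 0 := by
      simp [ZMod.natCast_self]
    push_cast at h1
    exact h1
  have hPh : ¬ ∀ S, ∃ u : ZMod (2^h), c S = 2^h * u := by
    intro hPh
    obtain ⟨u, hu⟩ := hPh S₀'
    exact hS₀' (by rw [hu, h2h, zero_mul])
  obtain ⟨t, hth, hPt, hPt1⟩ :=
    exists_max_nat (P := fun t => ∀ S, ∃ u : ZMod (2^h), c S = 2^t * u) hP0 hPh
  choose c' hc' using hPt
  have hdvd : (2:ℕ) ∣ 2^h := dvd_pow_self 2 (by omega)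
  set ρ : ZMod (2^h) →+* ZMod 2 := ZMod.castHom hdvd (ZMod 2) with hρdef
  have hρval : ∀ x : ZMod (2^h), ρ x = ((x.val : ℕ) : ZMod 2) := by
    intro x
    rw [hρdef, ZMod.castHom_apply, ZMod.natCast_val]
  have hkey : ∀ y : ZMod (2^h), (2:ZMod (2^h))^t * y = 0 → ρ y = 0 := by
    intro y hy
    rw [hρval, ZMod.natCast_eq_zero_iff]
    exact dvd_val_of_mul_eq_zero hth y hy
  set cb : Finset (Fin m) → ZMod 2 := fun S => ρ (c' S) with hcbdef
  have hcbne : ∃ S, cb S ≠ 0 := by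
    push_neg at hPt1
    obtain ⟨S₀, hS₀⟩ := hPt1
    refine ⟨S₀, fun hc0 => ?_⟩
    rw [hcbdef] at hc0
    simp only at hc0
    rw [hρval, ZMod.natCast_eq_zero_iff] at hc0
    obtain ⟨y, hy⟩ := eq_two_mul_of_dvd_val _ hc0
    exact hS₀ y (by rw [hc' S₀, hy, pow_succ]; ring)
  set r' := r - p + min t p with hr'def
  have hr'r : r' ≤ r := by omega
  have hdegb : ∀ S, r' < S.card → cb S = 0 := by
    intro S hS
    rcases le_or_gt S.card r with hSr | hSr
    · have htp : t < p := by
        rcases le_or_gt p t with h' | h'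
        · exfalso
          have : min t p = p := min_eq_right h'
          omega
        · exact h'
      have hmin : min t p = t := min_eq_left htp.le
      obtain ⟨u, hu⟩ := (hc S).2 (by omega) hSr
      obtain ⟨j, hj⟩ : ∃ j, S.card - (r-p) = (t+1) + j := ⟨S.card - (r-p) - (t+1), by omega⟩
      have key : (2:ZMod (2^h))^t * c' S = 2^t * (2 * (2^j * u)) := by
        rw [← hc' S, hu, hj, pow_add, pow_succ]
        ring
      have hz : (2:ZMod (2^h))^t * (c' S - 2 * (2^j * u)) = 0 := by
        rw [mul_sub, key]
        ring
      clear hj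
      have h1 := hkey _ hz
      rw [map_sub] at h1
      have h2 : ρ (2 * (2^j * u)) = 0 := by
        rw [map_mul]
        have : ρ 2 = 0 := by
          have h3 : (ρ 2 : ZMod 2) = (2 : ZMod 2) := map_ofNat ρ 2
          rw [h3]
          decide
        rw [this, zero_mul]
      rw [h2, sub_zero] at h1
      exact h1
    · have h0 : c S = 0 := (hc S).1 hSr
      exact hkey _ (by rw [← hc' S]; exact h0)
  have hsuppb : ∀ S : Finset (Fin m), ¬ S ⊆ Finset.univ → cb S = 0 :=
    fun S hS => absurd (Finset.subset_univ S) hS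
  have hRM := rm_bound (Finset.univ : Finset (Fin m)) r' cb hsuppb hdegb hcbne
  rw [Finset.card_univ, Fintype.card_fin] at hRM
  set G := (Finset.univ : Finset (Fin m)).powerset.filter
    (fun T => (∑ S ∈ T.powerset, cb S) ≠ 0) with hGdef
  set e := Equiv.ofBijective _ (bits_bijective m) with hedef
  set ψ : Finset (Fin m) → Fin (2^m) := fun T => e.symm (chi m T) with hψdef
  have hbitsψ : ∀ T, bits m (ψ T).val = chi m T := by
    intro T
    have h1 := e.apply_symm_apply (chi m T)
    rw [hedef] at h1
    exact h1
  have hψinj : Function.Injective ψ := fun T1 T2 he' =>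
    chi_injective m (e.symm.injective he')
  -- the key pointwise facts
  have hpoint : ∀ T ∈ G, (anfVec h m c (ψ T)).val ≥ 2^t
      ∧ 2^h - (anfVec h m c (ψ T)).val ≥ 2^t := by
    intro T hT
    have hTsum : (∑ S ∈ T.powerset, cb S) ≠ 0 := (Finset.mem_filter.mp hT).2
    have heval : anfVec h m c (ψ T) = 2^t * (∑ S ∈ T.powerset, c' S) := by
      rw [anfVec_eval h m c (ψ T) T (hbitsψ T), Finset.mul_sum]
      exact Finset.sum_congr rfl fun S _ => hc' S
    set z := ∑ S ∈ T.powerset, c' S with hzdef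
    have hρz : ρ z ≠ 0 := by
      rw [hzdef, map_sum]
      exact hTsum
    have hzodd : ¬ 2 ∣ z.val := by
      intro hd
      apply hρz
      rw [hρval, ZMod.natCast_eq_zero_iff]
      exact hd
    have := lee_lower hth z hzodd
    rw [← heval] at this
    exact ⟨le_of_le_of_eq (le_min_iff.mp this).1 rfl, (le_min_iff.mp this).2⟩
  have hψmem : ∀ T ∈ G, ψ T ∈ Finset.univ.filter fun i => anfVec h m c i ≠ 0 := by
    intro T hT
    refine Finset.mem_filter.mpr ⟨Finset.mem_univ _, fun h0 => ?_⟩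
    have := (hpoint T hT).1
    rw [h0, ZMod.val_zero] at this
    have : (0:ℕ) < 2^t := pow_pos (by norm_num) t
    omega
  have hGcard : G.card ≤ (Finset.univ.filter fun i => anfVec h m c i ≠ 0).card :=
    Finset.card_le_card_of_injOn ψ hψmem (hψinj.injOn)
  constructor
  · calc 2^(m-r) ≤ 2^(m-r') := Nat.pow_le_pow_right (by norm_num) (by omega)
    _ ≤ G.card := hRM
    _ ≤ _ := hGcard
  · -- Lee bound
    have hsub : G.image ψ ⊆ Finset.univ := Finset.subset_univ _
    have himgcard : (G.image ψ).card = G.card := Finset.card_image_of_injective G hψinj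
    have h1 : ∑ i ∈ G.image ψ, min ((anfVec h m c i).val) (2^h - (anfVec h m c i).val)
        ≤ wtL (anfVec h m c) := by
      unfold wtL
      exact Finset.sum_le_sum_of_subset hsub
    have h2 : G.card * 2^t ≤ ∑ i ∈ G.image ψ, min ((anfVec h m c i).val) (2^h - (anfVec h m c i).val) := by
      rw [← himgcard]
      calc (G.image ψ).card * 2^t = ∑ _i ∈ G.image ψ, 2^t := by
            rw [Finset.sum_const, smul_eq_mul]
      _ ≤ _ := by
            apply Finset.sum_le_sum
            intro i hi
            obtain ⟨T, hT, rfl⟩ := Finset.mem_image.mp hi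
            exact le_min (hpoint T hT).1 (hpoint T hT).2
    have h3 : 2^(m-r+p) ≤ G.card * 2^t := by
      calc 2^(m-r+p) ≤ 2^((m-r') + t) := Nat.pow_le_pow_right (by norm_num) (by omega)
      _ = 2^(m-r') * 2^t := pow_add 2 _ _
      _ ≤ G.card * 2^t := Nat.mul_le_mul_right _ hRM
    omega

-- Section 8: linearity of anfVec and zrmCond
lemma anfVec_add (h m : ℕ) (c c' : Finset (Fin m) → ZMod (2^h)) :
    anfVec h m (fun S => c S + c' S) = anfVec h m c + anfVec h m c' := by
  funext i
  simp [anfVec, add_mul, Finset.sum_add_distrib]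

lemma anfVec_sub (h m : ℕ) (c c' : Finset (Fin m) → ZMod (2^h)) :
    anfVec h m (fun S => c S - c' S) = anfVec h m c - anfVec h m c' := by
  funext i
  simp [anfVec, sub_mul, Finset.sum_sub_distrib]

lemma zrmCond_add (h p r m : ℕ) (c c' : Finset (Fin m) → ZMod (2^h))
    (hc : zrmCond h p r m c) (hc' : zrmCond h p r m c') :
    zrmCond h p r m (fun S => c S + c' S) := by
  intro S
  refine ⟨fun hr => by show c S + c' S = 0; rw [(hc S).1 hr, (hc' S).1 hr, add_zero], fun h1 h2 => ?_⟩
  obtain ⟨u, hu⟩ := (hc S).2 h1 h2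
  obtain ⟨u', hu'⟩ := (hc' S).2 h1 h2
  exact ⟨u + u', by show c S + c' S = _; rw [hu, hu', mul_add]⟩

lemma zrmCond_sub (h p r m : ℕ) (c c' : Finset (Fin m) → ZMod (2^h))
    (hc : zrmCond h p r m c) (hc' : zrmCond h p r m c') :
    zrmCond h p r m (fun S => c S - c' S) := by
  intro S
  refine ⟨fun hr => by show c S - c' S = 0; rw [(hc S).1 hr, (hc' S).1 hr, sub_zero], fun h1 h2 => ?_⟩
  obtain ⟨u, hu⟩ := (hc S).2 h1 h2
  obtain ⟨u', hu'⟩ := (hc' S).2 h1 h2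
  exact ⟨u - u', by show c S - c' S = _; rw [hu, hu', mul_sub]⟩

lemma zrm_mono (h p m k : ℕ) (hp : 0 < p) (hpk : p ≤ k + 2)
    (c : Finset (Fin m) → ZMod (2^h)) (hc : zrmCond h (p-1) (k+1) m c) :
    zrmCond h p (k+2) m c := by
  intro S
  obtain ⟨h1, h2⟩ := hc S
  constructor
  · intro hr
    exact h1 (by omega)
  · intro ha hb
    rcases le_or_gt S.card (k+1) with hS | hS
    · obtain ⟨u, hu⟩ := h2 (by omega) hS
      refine ⟨u, ?_⟩
      rw [hu]
      congr 2
      omega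
    · exact ⟨0, by rw [h1 (by omega), mul_zero]⟩

-- Section 9: ANF of elementary indicator products
def termC {m : ℕ} (q : ℕ) (A B : Finset (Fin m)) : Finset (Fin m) → ZMod q :=
  fun S => if A ⊆ S ∧ S ⊆ A ∪ B then (-1 : ZMod q)^((S \ A).card) else 0

lemma termC_eq_zero {m q : ℕ} {A B S : Finset (Fin m)} (h : (A ∪ B).card < S.card) :
    termC q A B S = 0 := by
  unfold termC
  rw [if_neg]
  rintro ⟨_, h2⟩
  exact absurd (Finset.card_le_card h2) (by omega)

lemma termC_sum (q m : ℕ) (A B : Finset (Fin m)) (hAB : Disjoint A B) (x : Fin m → ZMod q) :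
    (∑ S : Finset (Fin m), termC q A B S * ∏ v ∈ S, x v)
      = (∏ v ∈ A, x v) * ∏ v ∈ B, (1 - x v) := by
  classical
  have himg : Finset.univ.filter (fun S => A ⊆ S ∧ S ⊆ A ∪ B)
      = B.powerset.image (fun T => A ∪ T) := by
    ext S
    simp only [Finset.mem_filter, Finset.mem_univ, true_and, Finset.mem_image,
      Finset.mem_powerset]
    constructor
    · rintro ⟨h1, h2⟩
      refine ⟨S \ A, ?_, Finset.union_sdiff_of_subset h1⟩
      intro a ha
      obtain ⟨haS, haA⟩ := Finset.mem_sdiff.mp ha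
      rcases Finset.mem_union.mp (h2 haS) with h' | h'
      · exact absurd h' haA
      · exact h'
    · rintro ⟨T, hT, rfl⟩
      exact ⟨Finset.subset_union_left, Finset.union_subset_union_right hT⟩
  calc (∑ S : Finset (Fin m), termC q A B S * ∏ v ∈ S, x v)
      = ∑ S ∈ Finset.univ.filter (fun S => A ⊆ S ∧ S ⊆ A ∪ B),
          (-1:ZMod q)^((S \ A).card) * ∏ v ∈ S, x v := by
        rw [Finset.sum_filter]
        refine Finset.sum_congr rfl fun S _ => ?_
        unfold termC
        split <;> simp
    _ = ∑ T ∈ B.powerset, (-1:ZMod q)^(((A ∪ T) \ A).card) * ∏ v ∈ A ∪ T, x v := by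
        rw [himg]
        apply Finset.sum_image
        intro T1 h1 T2 h2 he
        have d1 : Disjoint A T1 := hAB.mono_right (Finset.mem_powerset.mp h1)
        have d2 : Disjoint A T2 := hAB.mono_right (Finset.mem_powerset.mp h2)
        rw [← Finset.union_sdiff_cancel_left d1, ← Finset.union_sdiff_cancel_left d2, show A ∪ T1 = A ∪ T2 from he]
    _ = ∑ T ∈ B.powerset, (-1:ZMod q)^(T.card) * ((∏ v ∈ A, x v) * ∏ v ∈ T, x v) := by
        refine Finset.sum_congr rfl fun T hT => ?_
        have d : Disjoint A T := hAB.mono_right (Finset.mem_powerset.mp hT)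
        rw [Finset.union_sdiff_cancel_left d, Finset.prod_union d]
    _ = (∏ v ∈ A, x v) * ∑ T ∈ B.powerset, (-1:ZMod q)^(T.card) * ∏ v ∈ T, x v := by
        rw [Finset.mul_sum]
        exact Finset.sum_congr rfl fun T _ => by ring
    _ = (∏ v ∈ A, x v) * ∏ v ∈ B, (1 - x v) := by
        congr 1
        have hcong : ∀ v ∈ B, (1 - x v) = (-x v) + 1 := fun v _ => by ring
        rw [Finset.prod_congr rfl hcong, Finset.prod_add]
        refine Finset.sum_congr rfl fun T _ => ?_
        rw [Finset.prod_const_one, mul_one]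
        calc (-1:ZMod q)^(T.card) * ∏ v ∈ T, x v
            = (∏ _v ∈ T, (-1:ZMod q)) * ∏ v ∈ T, x v := by rw [Finset.prod_const]
          _ = ∏ v ∈ T, ((-1) * x v) := Finset.prod_mul_distrib.symm
          _ = ∏ v ∈ T, (-x v) := Finset.prod_congr rfl fun v _ => by ring

-- Section 10: the ANF of bFun
lemma bFun_anf (h m k : ℕ) (hkm : k + 2 ≤ m) (iI : ℕ → Fin m) (jJ : Fin k → Fin m)
    (hjInj : Function.Injective jJ) (hdisj : ∀ a < m - k, ∀ b : Fin k, iI a ≠ jJ b)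
    (π : (Fin k → ZMod 2) → ℕ → Fin m)
    (hπ : ∀ d, Set.InjOn (π d) (Set.Iio (m - k)) ∧
      (π d) '' Set.Iio (m - k) = iI '' Set.Iio (m - k)) :
    ∃ c : Finset (Fin m) → ZMod (2^h),
      (∀ S, (k+2 < S.card → c S = 0) ∧ ∃ u, c S = 2^(h-1) * u) ∧
      ∀ y : Fin m → ZMod 2,
        bFun h m k jJ π y = ∑ S : Finset (Fin m), c S * ∏ v ∈ S, (((y v).val : ℕ) : ZMod (2^h)) := by
  classical
  set q := 2^h with hq
  set J1 : (Fin k → ZMod 2) → Finset (Fin m) := fun d =>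
    (Finset.univ.filter fun β => d β = 1).image jJ with hJ1
  set Bd : (Fin k → ZMod 2) → Finset (Fin m) := fun d =>
    (Finset.univ.filter fun β => ¬ d β = 1).image jJ with hBd
  set Ad : (Fin k → ZMod 2) → ℕ → Finset (Fin m) := fun d α =>
    insert (π d α) (insert (π d (α+1)) (J1 d)) with hAd
  -- membership facts
  have hπI : ∀ (d) (α), α < m - k → ∀ b : Fin k, π d α ≠ jJ b := by
    intro d α hα b
    have h1 : π d α ∈ (π d) '' Set.Iio (m-k) := ⟨α, hα, rfl⟩
    rw [(hπ d).2] at h1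
    obtain ⟨a, ha, hae⟩ := h1
    rw [← hae]
    exact hdisj a ha b
  have hπne : ∀ (d) (α), α < m - k - 1 → π d α ≠ π d (α+1) := by
    intro d α hα he
    have := (hπ d).1 (by simp only [Set.mem_Iio]; omega : α ∈ Set.Iio (m-k))
      (by simp only [Set.mem_Iio]; omega : α + 1 ∈ Set.Iio (m-k)) he
    omega
  have hπnJ : ∀ (d) (α), α < m - k → ∀ E : Finset (Fin k), π d α ∉ E.image jJ := by
    intro d α hα E hmem
    obtain ⟨b, _, hb⟩ := Finset.mem_image.mp hmem
    exact hπI d α hα b hb.symm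
  have hdisjAB : ∀ (d) (α), α < m - k - 1 → Disjoint (Ad d α) (Bd d) := by
    intro d α hα
    rw [Finset.disjoint_left]
    intro v hv hvB
    rw [hAd] at hv
    simp only [Finset.mem_insert] at hv
    rcases hv with rfl | rfl | hv
    · exact hπnJ d α (by omega) _ hvB
    · exact hπnJ d (α+1) (by omega) _ hvB
    · rw [hJ1] at hv
      rw [hBd] at hvB
      obtain ⟨b1, hb1, hbe1⟩ := Finset.mem_image.mp hv
      obtain ⟨b2, hb2, hbe2⟩ := Finset.mem_image.mp hvB
      have hbb : b1 = b2 := hjInj (by rw [hbe1, hbe2])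
      exact (Finset.mem_filter.mp hb2).2 (hbb ▸ (Finset.mem_filter.mp hb1).2)
  have hcard : ∀ (d) (α), (Ad d α ∪ Bd d).card ≤ k + 2 := by
    intro d α
    have h1 : Ad d α ∪ Bd d ⊆ insert (π d α) (insert (π d (α+1)) (Finset.univ.image jJ)) := by
      intro v hv
      rcases Finset.mem_union.mp hv with hv | hv
      · rw [hAd] at hv
        simp only [Finset.mem_insert] at hv ⊢
        rcases hv with rfl | rfl | hv
        · left; rfl
        · right; left; rfl
        · right; right
          rw [hJ1] at hv
          exact Finset.image_subset_image (Finset.filter_subset _ _) hv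
      · simp only [Finset.mem_insert]
        right; right
        rw [hBd] at hv
        exact Finset.image_subset_image (Finset.filter_subset _ _) hv
    calc (Ad d α ∪ Bd d).card ≤ _ := Finset.card_le_card h1
      _ ≤ (insert (π d (α+1)) (Finset.univ.image jJ)).card + 1 := Finset.card_insert_le _ _
      _ ≤ ((Finset.univ.image jJ).card + 1) + 1 := by
          have := Finset.card_insert_le (π d (α+1)) (Finset.univ.image jJ)
          omega
      _ ≤ k + 2 := by
          have h2 : (Finset.univ.image jJ).card ≤ (Finset.univ : Finset (Fin k)).card :=
            Finset.card_image_le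
          simp only [Finset.card_univ, Fintype.card_fin] at h2
          omega
  refine ⟨fun S => 2^(h-1) * ∑ d : Fin k → ZMod 2, ∑ α ∈ Finset.range (m-k-1),
      termC q (Ad d α) (Bd d) S, fun S => ⟨?_, ?_⟩, ?_⟩
  · intro hS
    have hz : ∀ d : Fin k → ZMod 2, ∀ α ∈ Finset.range (m-k-1),
        termC q (Ad d α) (Bd d) S = 0 := by
      intro d α _
      exact termC_eq_zero (lt_of_le_of_lt (hcard d α) hS)
    show (2:ZMod q)^(h-1) * ∑ d : Fin k → ZMod 2, ∑ α ∈ Finset.range (m-k-1),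
        termC q (Ad d α) (Bd d) S = 0
    rw [Finset.sum_congr rfl fun d _ => Finset.sum_eq_zero (hz d), Finset.sum_const_zero,
      mul_zero]
  · exact ⟨_, rfl⟩
  · intro y
    set x : Fin m → ZMod q := fun v => (((y v).val : ℕ) : ZMod q) with hx
    have hxv : ∀ v, (((y v).val : ℕ) : ZMod q) = x v := fun v => rfl
    have cast1 : ∀ v : Fin m, (((1 - (y v).val : ℕ)) : ZMod q) = 1 - x v := by
      intro v
      have hle : (y v).val ≤ 1 := by
        have := ZMod.val_lt (y v)
        omega
      rw [Nat.cast_sub hle, Nat.cast_one]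
    have hRHS : (∑ S : Finset (Fin m), (2^(h-1) * ∑ d : Fin k → ZMod 2,
          ∑ α ∈ Finset.range (m-k-1), termC q (Ad d α) (Bd d) S) * ∏ v ∈ S, x v)
        = 2^(h-1) * ∑ d : Fin k → ZMod 2, ∑ α ∈ Finset.range (m-k-1),
            ((∏ v ∈ Ad d α, x v) * ∏ v ∈ Bd d, (1 - x v)) := by
      have step1 : ∀ S : Finset (Fin m),
          (2^(h-1) * ∑ d : Fin k → ZMod 2,
            ∑ α ∈ Finset.range (m-k-1), termC q (Ad d α) (Bd d) S) * ∏ v ∈ S, x v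
          = 2^(h-1) * ∑ d : Fin k → ZMod 2,
              ∑ α ∈ Finset.range (m-k-1), termC q (Ad d α) (Bd d) S * ∏ v ∈ S, x v := by
        intro S
        rw [mul_assoc, Finset.sum_mul]
        congr 1
        exact Finset.sum_congr rfl fun d _ => Finset.sum_mul _ _ _
      rw [Finset.sum_congr rfl fun S _ => step1 S, ← Finset.mul_sum]
      congr 1
      rw [Finset.sum_comm]
      refine Finset.sum_congr rfl fun d _ => ?_
      rw [Finset.sum_comm]
      refine Finset.sum_congr rfl fun α hα => ?_
      exact termC_sum q m (Ad d α) (Bd d) (hdisjAB d α (Finset.mem_range.mp hα)) x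
    show bFun h m k jJ π y = ∑ S : Finset (Fin m), (2^(h-1) * ∑ d : Fin k → ZMod 2,
          ∑ α ∈ Finset.range (m-k-1), termC q (Ad d α) (Bd d) S) * ∏ v ∈ S, x v
    rw [hRHS]
    unfold bFun
    push_cast
    simp only [cast1, hxv]
    congr 1
    refine Finset.sum_congr rfl fun d _ => ?_
    rw [Finset.sum_mul]
    refine Finset.sum_congr rfl fun α hα => ?_
    have hαlt : α < m - k - 1 := Finset.mem_range.mp hα
    have hnm2 : π d (α+1) ∉ J1 d := hπnJ d (α+1) (by omega) _
    have hnm1 : π d α ∉ insert (π d (α+1)) (J1 d) := by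
      rw [Finset.mem_insert]
      rintro (he | hmem)
      · exact hπne d α hαlt he
      · exact hπnJ d α (by omega) _ hmem
    have hA : ∏ v ∈ Ad d α, x v
        = x (π d α) * (x (π d (α+1)) * ∏ v ∈ J1 d, x v) := by
      show ∏ v ∈ insert (π d α) (insert (π d (α+1)) (J1 d)), x v = _
      rw [Finset.prod_insert hnm1, Finset.prod_insert hnm2]
    have hJ : ∏ v ∈ J1 d, x v
        = ∏ β ∈ Finset.univ.filter (fun β => d β = 1), x (jJ β) := by
      show ∏ v ∈ (Finset.univ.filter (fun β => d β = 1)).image jJ, x v = _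
      exact Finset.prod_image fun b _ b' _ hbb => hjInj hbb
    have hB : ∏ v ∈ Bd d, (1 - x v)
        = ∏ β ∈ Finset.univ.filter (fun β => ¬ d β = 1), (1 - x (jJ β)) := by
      show ∏ v ∈ (Finset.univ.filter (fun β => ¬ d β = 1)).image jJ, (1 - x v) = _
      exact Finset.prod_image fun b _ b' _ hbb => hjInj hbb
    have hsplitb : (∏ b : Fin k, (x (jJ b))^(d b).val * (1 - x (jJ b))^(1 - (d b).val))
        = (∏ β ∈ Finset.univ.filter (fun β => d β = 1), x (jJ β))
          * ∏ β ∈ Finset.univ.filter (fun β => ¬ d β = 1), (1 - x (jJ β)) := by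
      rw [← Finset.prod_filter_mul_prod_filter_not Finset.univ (fun β => d β = 1)]
      congr 1
      · refine Finset.prod_congr rfl fun β hβ => ?_
        have h1 : d β = 1 := (Finset.mem_filter.mp hβ).2
        rw [h1]
        have hv1 : (1 : ZMod 2).val = 1 := rfl
        rw [hv1]
        norm_num
      · refine Finset.prod_congr rfl fun β hβ => ?_
        have h1 : d β = 0 :=
          (by decide : ∀ z : ZMod 2, z ≠ 1 → z = 0) _ (Finset.mem_filter.mp hβ).2
        rw [h1]
        have hv0 : (0 : ZMod 2).val = 0 := rfl
        rw [hv0]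
        norm_num
    rw [hsplitb, hA, hJ, hB]
    ring

-- AUX END
/-- Class III codes (`p > 0`): the union of the cosets `b + A_{2^h}^{p-1}(k,k+1,m)` over all
`b ∈ R_{2^h}(k,m)` is contained in `ZRM_{2^h}^p(k+2,m)`, hence has minimum Hamming distance
at least `2^{m-k-2}` and minimum Lee distance at least `2^{m-k-2+p}`. -/
theorem stmt_17 (h p m k : ℕ) (hph : p < h) (hp : 0 < p) (hpk : p ≤ k + 2) (hkm : k + 2 ≤ m)
    (iI : ℕ → Fin m) (jJ : Fin k → Fin m)
    (hiInj : Set.InjOn iI (Set.Iio (m - k))) (hjInj : Function.Injective jJ)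
    (hdisj : ∀ a < m - k, ∀ b : Fin k, iI a ≠ jJ b)
    (hcover : ∀ v : Fin m, (∃ a < m - k, iI a = v) ∨ ∃ b : Fin k, jJ b = v) :
    (∀ w, (∃ b ∈ RCode h m k iI jJ,
        ∃ a ∈ LCode h m k iI jJ ∩ ZRM h (p - 1) (k + 1) m, w = b + a) →
      w ∈ ZRM h p (k + 2) m) ∧
    (∀ u v : Fin (2 ^ m) → ZMod (2 ^ h),
      (∃ b ∈ RCode h m k iI jJ,
        ∃ a ∈ LCode h m k iI jJ ∩ ZRM h (p - 1) (k + 1) m, u = b + a) →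
      (∃ b ∈ RCode h m k iI jJ,
        ∃ a ∈ LCode h m k iI jJ ∩ ZRM h (p - 1) (k + 1) m, v = b + a) →
      u ≠ v →
      2 ^ (m - k - 2) ≤ distH u v ∧ 2 ^ (m - k - 2 + p) ≤ wtL (u - v)) := by
  have partA : ∀ w : Fin (2^m) → ZMod (2^h), (∃ b ∈ RCode h m k iI jJ,
      ∃ a ∈ LCode h m k iI jJ ∩ ZRM h (p - 1) (k + 1) m, w = b + a) →
      w ∈ ZRM h p (k + 2) m := by
    rintro w ⟨b, ⟨π, hπprops, hbdef⟩, a, ⟨_, ⟨ca, hcaCond, hadef⟩⟩, rfl⟩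
    obtain ⟨cb, hcb, hbeval⟩ := bFun_anf h m k hkm iI jJ hjInj hdisj π hπprops
    have hbv : b = anfVec h m cb := by
      rw [hbdef]
      funext i
      rw [hbeval (bits m i.val)]
      rfl
    have hcbz : zrmCond h p (k+2) m cb := by
      intro S
      refine ⟨fun hr => (hcb S).1 hr, fun h1 h2 => ?_⟩
      obtain ⟨u, hu⟩ := (hcb S).2
      refine ⟨2^(h-1-(S.card - (k+2-p))) * u, ?_⟩
      rw [hu, ← mul_assoc, ← pow_add]
      congr 2
      omega
    exact ⟨fun S => cb S + ca S,
      zrmCond_add h p (k+2) m cb ca hcbz (zrm_mono h p m k hp hpk ca hcaCond),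
      by rw [anfVec_add, ← hbv, ← hadef]⟩
  refine ⟨partA, ?_⟩
  intro u v hu hv huv
  obtain ⟨cu, hcuz, hue⟩ := partA u hu
  obtain ⟨cv, hcvz, hve⟩ := partA v hv
  have hsubv : u - v = anfVec h m (fun S => cu S - cv S) := by
    rw [hue, hve, anfVec_sub]
  have hzc : zrmCond h p (k+2) m (fun S => cu S - cv S) :=
    zrmCond_sub h p (k+2) m cu cv hcuz hcvz
  have hne0 : anfVec h m (fun S => cu S - cv S) ≠ 0 := by
    rw [← hsubv]
    exact sub_ne_zero.mpr huv
  have hW := zrm_weight h p (k+2) m hph hp hpk hkm _ hzc hne0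
  constructor
  · have hfil : (Finset.univ.filter fun i => u i ≠ v i)
        = Finset.univ.filter fun i => anfVec h m (fun S => cu S - cv S) i ≠ 0 := by
      apply Finset.filter_congr
      intro i _
      rw [← hsubv]
      simp only [Pi.sub_apply, ne_eq, sub_eq_zero]
    unfold distH
    rw [hfil, show m - k - 2 = m - (k+2) by omega]
    exact hW.1
  · rw [hsubv, show m - k - 2 + p = m - (k+2) + p by omega]
    exact hW.2
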